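/- Fix δ > 0, γ > 0, q > 0, π ∈ (0,1), r ∈ {1,2}, an r×r diagonal positive-definite matrix S, and V ∈ ℝ^{2×r} with VᵀV = I_r. Let G ∼ N(0,1), Y an independent random sign with P(Y=+1) = π, E_Y := e₁·1{Y=+1} − e₂·1{Y=−1}, Δ_Y := δ·1{Y=+1} + 1·1{Y=−1}. Then the function (ρ, b) ↦ E[( G + E_YᵀVSρ + (bY − Δ_Y)/q )₋²] + γ‖ρ‖₂², on ℝ^r × ℝ, is jointly strictly convex. Consequently, for each fixed q > 0, the minimizer (ρ, b) of η_δ(q, ρ, b) := E[( G + E_YᵀVSρ + (bY − Δ_Y)/q )₋²] − (1 − ‖ρ‖₂²)γ over {ρ : ‖ρ‖₂ ≤ 1} × ℝ is unique whenever it exists. -/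

import Mathlib

open MeasureTheory ProbabilityTheory Matrix Real

/-- Negative part `(x)₋ = min(x, 0)`. -/
noncomputable def negp (x : ℝ) : ℝ := min x 0

/-- The standard Gaussian measure on `ℝ`. -/
noncomputable def stdGauss : Measure ℝ := gaussianReal 0 1

lemma negp_sq_ineq (x y a b : ℝ) (ha : 0 ≤ a) (hb : 0 ≤ b) (hab : a + b = 1) :
    negp (a*x + b*y) ^ 2 ≤ a * negp x ^ 2 + b * negp y ^ 2 := by
  have hux : negp x ≤ x := min_le_left _ _
  have hu0 : negp x ≤ 0 := min_le_right _ _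
  have hvy : negp y ≤ y := min_le_left _ _
  have hv0 : negp y ≤ 0 := min_le_right _ _
  have hw0 : negp (a*x+b*y) ≤ 0 := min_le_right _ _
  have hw : a * negp x + b * negp y ≤ negp (a*x+b*y) := by
    apply le_min
    · nlinarith
    · nlinarith
  have h1 : negp (a*x+b*y)^2 ≤ (a * negp x + b * negp y)^2 := by nlinarith
  have h2 : (a * negp x + b * negp y)^2 ≤ a * negp x ^ 2 + b * negp y ^ 2 := by
    nlinarith [sq_nonneg (negp x - negp y), mul_nonneg ha hb]
  linarith

lemma negp_sq_strict (x y a b : ℝ) (hx : x < 0) (hy : y < 0) (hxy : x ≠ y)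
    (ha : 0 < a) (hb : 0 < b) (hab : a + b = 1) :
    negp (a*x + b*y) ^ 2 < a * negp x ^ 2 + b * negp y ^ 2 := by
  have h1 : negp x = x := min_eq_left hx.le
  have h2 : negp y = y := min_eq_left hy.le
  have h3 : a*x + b*y < 0 := by nlinarith
  have h4 : negp (a*x+b*y) = a*x+b*y := min_eq_left h3.le
  rw [h1, h2, h4]
  have hne : x - y ≠ 0 := sub_ne_zero.2 hxy
  have hpos : 0 < (x - y)^2 := by positivity
  nlinarith [mul_pos ha hb]

lemma integrable_sq_gauss (c : ℝ) : Integrable (fun g : ℝ => (g + c) ^ 2) stdGauss := by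
  rw [stdGauss, gaussianReal_of_var_ne_zero _ one_ne_zero]
  rw [integrable_withDensity_iff (measurable_gaussianPDF 0 1)
    (ae_of_all _ (fun x => ENNReal.ofReal_lt_top))]
  have h0 : Integrable (fun x : ℝ => rexp (-(1/2) * x^2)) := integrable_exp_neg_mul_sq (by norm_num)
  have h1 : Integrable (fun x : ℝ => x * rexp (-(1/2) * x^2)) :=
    integrable_mul_exp_neg_mul_sq (by norm_num)
  have h2 : Integrable (fun x : ℝ => x^2 * rexp (-(1/2) * x^2)) := by
    have := integrable_rpow_mul_exp_neg_mul_sq (b := 1/2) (by norm_num) (s := 2) (by norm_num)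
    refine this.congr (ae_of_all _ fun x => ?_)
    beta_reduce
    congr 1
    rw [← Real.rpow_natCast x 2]
    norm_num
  have key : Integrable (fun x : ℝ =>
      ((√(2 * π))⁻¹ * ((x^2 * rexp (-(1/2) * x^2)) + ((2*c) * (x * rexp (-(1/2) * x^2)) + c^2 * rexp (-(1/2) * x^2)))) ) :=
    ((h2.add ((h1.const_mul (2*c)).add (h0.const_mul (c^2)))).const_mul _)
  refine key.congr (ae_of_all _ fun x => ?_)
  simp only [gaussianPDF]
  rw [ ENNReal.toReal_ofReal (gaussianPDFReal_nonneg _ _ _), gaussianPDFReal]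
  push_cast
  ring_nf

lemma negp_cont : Continuous negp := continuous_id.min continuous_const

lemma integrable_negp (c : ℝ) : Integrable (fun g : ℝ => negp (g + c) ^ 2) stdGauss := by
  refine (integrable_sq_gauss c).mono ?_ (ae_of_all _ fun g => ?_)
  · exact ((negp_cont.comp (continuous_id.add continuous_const)).pow 2).aestronglyMeasurable
  · rw [Real.norm_eq_abs, Real.norm_eq_abs, abs_le]
    constructor
    · nlinarith [sq_nonneg (negp (g+c)), abs_nonneg ((g+c)^2), le_abs_self ((g+c)^2)]
    · have : negp (g+c)^2 ≤ (g+c)^2 := by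
        rcases le_or_gt (g + c) 0 with h | h
        · rw [negp, min_eq_left h]
        · rw [negp, min_eq_right h.le]
          simpa using sq_nonneg (g + c)
      exact this.trans (le_abs_self _)
  
noncomputable def F (t : ℝ) : ℝ := ∫ g, negp (g + t) ^ 2 ∂stdGauss

lemma F_convex (t₁ t₂ a b : ℝ) (ha : 0 ≤ a) (hb : 0 ≤ b) (hab : a + b = 1) :
    F (a * t₁ + b * t₂) ≤ a * F t₁ + b * F t₂ := by
  have key : ∀ g : ℝ, negp (g + (a * t₁ + b * t₂)) ^ 2
      ≤ a * negp (g + t₁) ^ 2 + b * negp (g + t₂) ^ 2 := by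
    intro g
    have := negp_sq_ineq (g + t₁) (g + t₂) a b ha hb hab
    have harg : a * (g + t₁) + b * (g + t₂) = g + (a * t₁ + b * t₂) := by linear_combination g * hab
    rwa [harg] at this
  have hI₁ := integrable_negp t₁
  have hI₂ := integrable_negp t₂
  calc F (a * t₁ + b * t₂) ≤ ∫ g, (a * negp (g + t₁) ^ 2 + b * negp (g + t₂) ^ 2) ∂stdGauss := by
        exact integral_mono (integrable_negp _) ((hI₁.const_mul a).add (hI₂.const_mul b)) key
    _ = a * F t₁ + b * F t₂ := by
        have h1' : Integrable (fun g : ℝ => a * negp (g + t₁) ^ 2) stdGauss := hI₁.const_mul a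
        have h2' : Integrable (fun g : ℝ => b * negp (g + t₂) ^ 2) stdGauss := hI₂.const_mul b
        rw [integral_add h1' h2', integral_const_mul, integral_const_mul]
        rfl

lemma stdGauss_Iio_pos (c : ℝ) : 0 < stdGauss (Set.Iio c) := by
  rcases eq_or_lt_of_le (zero_le : (0 : ENNReal) ≤ stdGauss (Set.Iio c)) with h | h
  · exfalso
    have := (gaussianReal_absolutelyContinuous' 0 one_ne_zero) (h.symm : gaussianReal 0 1 (Set.Iio c) = 0)
    rw [Real.volume_Iio] at this
    simp at this
  · exact h

lemma F_strict (t₁ t₂ a b : ℝ) (hne : t₁ ≠ t₂) (ha : 0 < a) (hb : 0 < b) (hab : a + b = 1) :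
    F (a * t₁ + b * t₂) < a * F t₁ + b * F t₂ := by
  set D : ℝ → ℝ := fun g => a * negp (g + t₁) ^ 2 + b * negp (g + t₂) ^ 2
    - negp (g + (a * t₁ + b * t₂)) ^ 2 with hD
  have harg : ∀ g : ℝ, a * (g + t₁) + b * (g + t₂) = g + (a * t₁ + b * t₂) := by
    intro g; linear_combination g * hab
  have hDnn : ∀ g, 0 ≤ D g := by
    intro g
    have := negp_sq_ineq (g + t₁) (g + t₂) a b ha.le hb.le hab
    rw [harg g] at this
    simp only [hD]; linarith
  have hDpos : ∀ g ∈ Set.Iio (-(max t₁ t₂)), 0 < D g := by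
    intro g hg
    rw [Set.mem_Iio] at hg
    have h1 : g + t₁ < 0 := by have := le_max_left t₁ t₂; linarith
    have h2 : g + t₂ < 0 := by have := le_max_right t₁ t₂; linarith
    have h3 : g + t₁ ≠ g + t₂ := by intro h; exact hne (by linarith)
    have := negp_sq_strict (g + t₁) (g + t₂) a b h1 h2 h3 ha hb hab
    rw [harg g] at this
    simp only [hD]; linarith
  have hI₁ := integrable_negp t₁
  have hI₂ := integrable_negp t₂
  have hI₃ := integrable_negp (a * t₁ + b * t₂)
  have hDint : Integrable D stdGauss := ((hI₁.const_mul a).add (hI₂.const_mul b)).sub hI₃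
  have hpos : 0 < ∫ g, D g ∂stdGauss := by
    rw [integral_pos_iff_support_of_nonneg_ae (ae_of_all _ hDnn) hDint]
    refine lt_of_lt_of_le (stdGauss_Iio_pos (-(max t₁ t₂))) (measure_mono ?_)
    intro g hg
    exact (hDpos g hg).ne'
  have heq : ∫ g, D g ∂stdGauss = a * F t₁ + b * F t₂ - F (a * t₁ + b * t₂) := by
    have h1' : Integrable (fun g : ℝ => a * negp (g + t₁) ^ 2) stdGauss := hI₁.const_mul a
    have h2' : Integrable (fun g : ℝ => b * negp (g + t₂) ^ 2) stdGauss := hI₂.const_mul b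
    have hsum : Integrable (fun g : ℝ => a * negp (g + t₁) ^ 2 + b * negp (g + t₂) ^ 2) stdGauss :=
      h1'.add h2'
    simp only [hD]
    rw [integral_sub hsum hI₃, integral_add h1' h2', integral_const_mul, integral_const_mul]
    rfl
  linarith [heq ▸ hpos]


lemma sq_comb_le (x y a b : ℝ) (ha : 0 ≤ a) (hb : 0 ≤ b) (hab : a + b = 1) :
    (a * x + b * y) ^ 2 ≤ a * x ^ 2 + b * y ^ 2 := by
  nlinarith [sq_nonneg (x - y), mul_nonneg ha hb]

lemma sq_comb_lt (x y a b : ℝ) (hxy : x ≠ y) (ha : 0 < a) (hb : 0 < b) (hab : a + b = 1) :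
    (a * x + b * y) ^ 2 < a * x ^ 2 + b * y ^ 2 := by
  have hne : x - y ≠ 0 := sub_ne_zero.2 hxy
  have hpos : 0 < (x - y)^2 := by positivity
  nlinarith [mul_pos ha hb]

lemma sumsq_comb_le {r : ℕ} (x y : Fin r → ℝ) (a b : ℝ) (ha : 0 ≤ a) (hb : 0 ≤ b)
    (hab : a + b = 1) :
    ∑ i, (a * x i + b * y i) ^ 2 ≤ a * ∑ i, x i ^ 2 + b * ∑ i, y i ^ 2 := by
  rw [Finset.mul_sum, Finset.mul_sum, ← Finset.sum_add_distrib]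
  exact Finset.sum_le_sum fun i _ => sq_comb_le _ _ _ _ ha hb hab

lemma sumsq_comb_lt {r : ℕ} (x y : Fin r → ℝ) (a b : ℝ) (hxy : x ≠ y) (ha : 0 < a) (hb : 0 < b)
    (hab : a + b = 1) :
    ∑ i, (a * x i + b * y i) ^ 2 < a * ∑ i, x i ^ 2 + b * ∑ i, y i ^ 2 := by
  rw [Finset.mul_sum, Finset.mul_sum, ← Finset.sum_add_distrib]
  obtain ⟨i0, hi0⟩ := Function.ne_iff.1 hxy
  refine Finset.sum_lt_sum (fun i _ => sq_comb_le _ _ _ _ ha.le hb.le hab) ⟨i0, Finset.mem_univ _, ?_⟩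
  exact sq_comb_lt _ _ _ _ hi0 ha hb hab

set_option maxHeartbeats 1000000 in
theorem stmt16 (δ γ q pp : ℝ) (hδ : 0 < δ) (hγ : 0 < γ) (hq : 0 < q)
    (hpp : 0 < pp) (hpp1 : pp < 1)
    (r : ℕ) (hr : r = 1 ∨ r = 2)
    (s : Fin r → ℝ) (hs : ∀ i, 0 < s i)
    (V : Matrix (Fin 2) (Fin r) ℝ) (hV : Vᵀ * V = 1)
    (Ex : (Fin r → ℝ) → ℝ → ℝ)
    (hEx : ∀ (ρ : Fin r → ℝ) (b : ℝ), Ex ρ b =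
      pp * ∫ g, negp (g + (V.mulVec ((Matrix.diagonal s).mulVec ρ)) 0 + (b - δ) / q) ^ 2 ∂stdGauss
      + (1 - pp) * ∫ g, negp (g - (V.mulVec ((Matrix.diagonal s).mulVec ρ)) 1 + (-b - 1) / q) ^ 2 ∂stdGauss) :
    StrictConvexOn ℝ Set.univ
      (fun p : (Fin r → ℝ) × ℝ => Ex p.1 p.2 + γ * ∑ i, p.1 i ^ 2) ∧
    ∀ p₁ p₂ : (Fin r → ℝ) × ℝ,
      (∑ i, p₁.1 i ^ 2) ≤ 1 → (∑ i, p₂.1 i ^ 2) ≤ 1 →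
      (∀ p : (Fin r → ℝ) × ℝ, (∑ i, p.1 i ^ 2) ≤ 1 →
        Ex p₁.1 p₁.2 - (1 - ∑ i, p₁.1 i ^ 2) * γ ≤ Ex p.1 p.2 - (1 - ∑ i, p.1 i ^ 2) * γ) →
      (∀ p : (Fin r → ℝ) × ℝ, (∑ i, p.1 i ^ 2) ≤ 1 →
        Ex p₂.1 p₂.2 - (1 - ∑ i, p₂.1 i ^ 2) * γ ≤ Ex p.1 p.2 - (1 - ∑ i, p.1 i ^ 2) * γ) →
      p₁ = p₂ := by
  have hq' : q ≠ 0 := hq.ne'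
  set l0 : (Fin r → ℝ) → ℝ := fun ρ => (V.mulVec ((Matrix.diagonal s).mulVec ρ)) 0 with hl0
  set l1 : (Fin r → ℝ) → ℝ := fun ρ => (V.mulVec ((Matrix.diagonal s).mulVec ρ)) 1 with hl1
  have hEx' : ∀ (ρ : Fin r → ℝ) (bb : ℝ), Ex ρ bb =
      pp * F (l0 ρ + (bb - δ) / q) + (1 - pp) * F (-(l1 ρ) + (-bb - 1) / q) := by
    intro ρ bb
    rw [hEx]
    congr 1
    · congr 1
      unfold F
      congr 1
      funext g
      rw [add_assoc]
    · congr 1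
      unfold F
      congr 1
      funext g
      congr 2
      ring
  have hLlin : ∀ (ll : (Fin r → ℝ) → ℝ), (ll = l0 ∨ ll = l1) →
      ∀ (aa bb : ℝ) (x y : Fin r → ℝ), ll (aa • x + bb • y) = aa * ll x + bb * ll y := by
    rintro ll (rfl | rfl) aa bb x y <;>
      simp [hl0, hl1, Matrix.mulVec_add, Matrix.mulVec_smul]
  have hl0lin := hLlin l0 (Or.inl rfl)
  have hl1lin := hLlin l1 (Or.inr rfl)
  -- the strictly convex function
  set f : (Fin r → ℝ) × ℝ → ℝ := fun p => Ex p.1 p.2 + γ * ∑ i, p.1 i ^ 2 with hf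
  have key : StrictConvexOn ℝ Set.univ f := by
    refine ⟨convex_univ, ?_⟩
    rintro p₁ - p₂ - hne a b ha hb hab
    simp only [smul_eq_mul, hf]
    have hfst : (a • p₁ + b • p₂).1 = a • p₁.1 + b • p₂.1 := rfl
    have hsnd : (a • p₁ + b • p₂).2 = a * p₁.2 + b * p₂.2 := rfl
    have hc1 : l0 (a • p₁ + b • p₂).1 + ((a • p₁ + b • p₂).2 - δ) / q
        = a * (l0 p₁.1 + (p₁.2 - δ) / q) + b * (l0 p₂.1 + (p₂.2 - δ) / q) := by
      rw [hfst, hsnd, hl0lin]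
      field_simp
      ring_nf
      linear_combination δ * hab
    have hc2 : -(l1 (a • p₁ + b • p₂).1) + (-(a • p₁ + b • p₂).2 - 1) / q
        = a * (-(l1 p₁.1) + (-p₁.2 - 1) / q) + b * (-(l1 p₂.1) + (-p₂.2 - 1) / q) := by
      rw [hfst, hsnd, hl1lin]
      field_simp
      ring_nf
      linear_combination hab
    have hQ : ∑ i, ((a • p₁ + b • p₂).1 i) ^ 2 = ∑ i, (a * p₁.1 i + b * p₂.1 i) ^ 2 := by
      rw [hfst]
      simp [Pi.add_apply, Pi.smul_apply, smul_eq_mul]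
    have E2 : F (-(l1 (a • p₁ + b • p₂).1) + (-(a • p₁ + b • p₂).2 - 1) / q)
        ≤ a * F (-(l1 p₁.1) + (-p₁.2 - 1) / q) + b * F (-(l1 p₂.1) + (-p₂.2 - 1) / q) := by
      rw [hc2]; exact F_convex _ _ _ _ ha.le hb.le hab
    have h1pp : (0:ℝ) ≤ 1 - pp := by linarith
    rw [hEx' _ _, hEx' p₁.1 p₁.2, hEx' p₂.1 p₂.2, hQ]
    by_cases hρ : p₁.1 = p₂.1
    · have hb2 : p₁.2 ≠ p₂.2 := by
        intro h
        exact hne (Prod.ext hρ h)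
      have hcne : l0 p₁.1 + (p₁.2 - δ) / q ≠ l0 p₂.1 + (p₂.2 - δ) / q := by
        rw [hρ]
        intro h
        apply hb2
        have := add_left_cancel h
        field_simp at this
        linarith
      have E1 : F (l0 (a • p₁ + b • p₂).1 + ((a • p₁ + b • p₂).2 - δ) / q)
          < a * F (l0 p₁.1 + (p₁.2 - δ) / q) + b * F (l0 p₂.1 + (p₂.2 - δ) / q) := by
        rw [hc1]; exact F_strict _ _ _ _ hcne ha hb hab
      have hQeq : ∑ i, (a * p₁.1 i + b * p₂.1 i) ^ 2
          ≤ a * ∑ i, p₁.1 i ^ 2 + b * ∑ i, p₂.1 i ^ 2 :=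
        sumsq_comb_le _ _ _ _ ha.le hb.le hab
      nlinarith [mul_lt_mul_of_pos_left E1 hpp, mul_le_mul_of_nonneg_left E2 h1pp,
        mul_le_mul_of_nonneg_left hQeq hγ.le]
    · have E1 : F (l0 (a • p₁ + b • p₂).1 + ((a • p₁ + b • p₂).2 - δ) / q)
          ≤ a * F (l0 p₁.1 + (p₁.2 - δ) / q) + b * F (l0 p₂.1 + (p₂.2 - δ) / q) := by
        rw [hc1]; exact F_convex _ _ _ _ ha.le hb.le hab
      have hQlt : ∑ i, (a * p₁.1 i + b * p₂.1 i) ^ 2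
          < a * ∑ i, p₁.1 i ^ 2 + b * ∑ i, p₂.1 i ^ 2 :=
        sumsq_comb_lt _ _ _ _ hρ ha hb hab
      nlinarith [mul_le_mul_of_nonneg_left E1 hpp.le, mul_le_mul_of_nonneg_left E2 h1pp,
        mul_lt_mul_of_pos_left hQlt hγ]
  refine ⟨key, ?_⟩
  intro p₁ p₂ hQ1 hQ2 hmin1 hmin2
  by_contra hne
  set m : (Fin r → ℝ) × ℝ := (1/2 : ℝ) • p₁ + (1/2 : ℝ) • p₂ with hm
  have hmQ : (∑ i, m.1 i ^ 2) ≤ 1 := by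
    have : ∑ i, m.1 i ^ 2 = ∑ i, ((1/2 : ℝ) * p₁.1 i + (1/2 : ℝ) * p₂.1 i) ^ 2 := by
      simp [hm, Pi.add_apply, Pi.smul_apply, smul_eq_mul]
    rw [this]
    calc ∑ i, ((1/2 : ℝ) * p₁.1 i + (1/2 : ℝ) * p₂.1 i) ^ 2
        ≤ (1/2 : ℝ) * ∑ i, p₁.1 i ^ 2 + (1/2 : ℝ) * ∑ i, p₂.1 i ^ 2 :=
          sumsq_comb_le _ _ _ _ (by norm_num) (by norm_num) (by norm_num)
      _ ≤ 1 := by linarith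
  have hflt := key.2 (Set.mem_univ p₁) (Set.mem_univ p₂) hne
    (by norm_num : (0:ℝ) < 1/2) (by norm_num : (0:ℝ) < 1/2) (by norm_num)
  simp only [smul_eq_mul, hf] at hflt
  -- values at the two minimizers are equal
  have hv1 := hmin1 p₂ hQ2
  have hv2 := hmin2 p₁ hQ1
  have h1m := hmin1 m hmQ
  -- translate
  have hfm : Ex m.1 m.2 + γ * ∑ i, m.1 i ^ 2
      < (1/2 : ℝ) * (Ex p₁.1 p₁.2 + γ * ∑ i, p₁.1 i ^ 2)
        + (1/2 : ℝ) * (Ex p₂.1 p₂.2 + γ * ∑ i, p₂.1 i ^ 2) := hflt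
  nlinarith [hfm, hv1, hv2, h1m]
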